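/- Theorem 3 (non-Abelian symmetry bound): Suppose H = ⊕_{λ=1}^d K_λ ⊗ K'_λ, the dynamics is U = ⊕_λ 1_{n_λ} ⊗ U_λ with U_λ unitary on K'_λ, the state is ρ = ⊕_λ ∑_ν p_λ^ν ρ_λ^ν ⊗ ρ'^ν_λ, and the partition is X = ⊕_λ X_λ ⊗ X'_λ built from partitions X_λ on K_λ and X'_λ on K'_λ. Then H_AFL(ρ, U, X, t) ≤ ∑_{λ,ν} p_λ^ν [H_AFL(ρ_λ^ν, 1_{n_λ}, X_λ, t) + H_AFL(ρ'^ν_λ, U_λ, X'_λ, t)] + H({p_λ^ν}). -/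

import Mathlib

open scoped BigOperators ComplexOrder
open Matrix Kronecker

namespace AFL

variable {n : Type*} [Fintype n] [DecidableEq n]

/-- von Neumann entropy of a (Hermitian) matrix, via its eigenvalues. -/
noncomputable def vNEntropy (ρ : Matrix n n ℂ) : ℝ :=
  if h : ρ.IsHermitian then -∑ i, h.eigenvalues i * Real.log (h.eigenvalues i) else 0

/-- A density matrix: positive semidefinite (hence Hermitian) with unit trace. -/
def IsDensity (ρ : Matrix n n ℂ) : Prop := ρ.PosSemidef ∧ ρ.trace = 1

/-- An operational partition of unity (Kraus operators of a channel). -/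
def IsPartition {K : Type*} [Fintype K] (X : K → Matrix n n ℂ) : Prop :=
  ∑ i, (X i)ᴴ * X i = 1

/-- The entropy-exchange (environment) state ρ̃[X]_{ij} = Tr(Xⁱ ρ Xʲ†). -/
noncomputable def envState {K : Type*} [Fintype K] (X : K → Matrix n n ℂ)
    (ρ : Matrix n n ℂ) : Matrix K K ℂ :=
  Matrix.of fun i j => (X i * ρ * (X j)ᴴ).trace

/-- Multitime Kraus operator U X^{i_t} ⋯ U X^{i_1} of the t-step evolved partition (UX)^t. -/
noncomputable def multiKraus {K : Type*} (U : Matrix n n ℂ) (X : K → Matrix n n ℂ)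
    (t : ℕ) (idx : Fin t → K) : Matrix n n ℂ :=
  (List.ofFn fun k => U * X (idx k)).prod

/-- Cumulative AFL entropy: von Neumann entropy of the environment state after t steps. -/
noncomputable def HAFL {K : Type*} [Fintype K] [DecidableEq K]
    (ρ U : Matrix n n ℂ) (X : K → Matrix n n ℂ) (t : ℕ) : ℝ :=
  vNEntropy (envState (multiKraus U X t) ρ)

/-- Shannon entropy of a probability vector. -/
noncomputable def shannon {ι : Type*} [Fintype ι] (p : ι → ℝ) : ℝ :=
  -∑ i, p i * Real.log (p i)

end AFL


noncomputable section

namespace AFLProof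

open AFL

local notation "conj'" => (starRingEnd ℂ)

variable {n : Type*} [Fintype n] [DecidableEq n]

lemma mul_sum_sum {β γ : Type*} [Fintype β] [Fintype γ] (c : ℂ) (f : β → ℂ) (g : γ → ℂ) :
    c * (∑ i, f i) * (∑ j, g j) = ∑ i, ∑ j, c * f i * g j := by
  rw [mul_assoc, Fintype.sum_mul_sum, Finset.mul_sum]
  exact Finset.sum_congr rfl fun i _ => by
    rw [Finset.mul_sum]
    exact Finset.sum_congr rfl fun j _ => by ring

/-- Jensen step: weights summing to at most one. -/
lemma negMulLog_jensen {J : Type*} [Fintype J] (D : J → ℝ) (μ : J → ℝ)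
    (hD : ∀ j, 0 ≤ D j) (hD1 : ∑ j, D j ≤ 1) (hμ : ∀ j, 0 ≤ μ j) :
    ∑ j, D j * Real.negMulLog (μ j) ≤ Real.negMulLog (∑ j, D j * μ j) := by
  have h := Real.concaveOn_negMulLog.le_map_sum (t := (Finset.univ : Finset (Option J)))
      (w := fun o => Option.elim o (1 - ∑ j, D j) D)
      (p := fun o => Option.elim o 0 μ) ?_ ?_ ?_
  · simpa [Fintype.sum_option, smul_eq_mul] using h
  · rintro (_|j) _
    · simpa using hD1
    · exact hD j
  · simp [Fintype.sum_option]
  · rintro (_|j) _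
    · simp
    · exact hμ j

/-- Key lemma: entropy of a matrix written as a nonnegative combination of
rank-one projectors onto unit vectors is at most the Shannon entropy of the weights. -/
lemma vNEntropy_le_of_rankOne {J α : Type*} [Fintype J] [DecidableEq J] [Fintype α]
    (q : α → ℝ) (hq : ∀ a, 0 ≤ q a) (w : α → J → ℂ)
    (hw : ∀ a, ∑ j, Complex.normSq (w a j) = 1)
    (σ : Matrix J J ℂ)
    (hσ : ∀ i j, σ i j = ∑ a, (q a : ℂ) * w a i * conj' (w a j)) :
    AFL.vNEntropy σ ≤ ∑ a, Real.negMulLog (q a) := by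
  classical
  -- Hermitian
  have hherm : σ.IsHermitian := by
    ext i j
    simp only [conjTranspose_apply, hσ, star_sum]
    refine Finset.sum_congr rfl fun a _ => ?_
    simp only [star_mul', Complex.star_def, Complex.conj_conj, Complex.conj_ofReal,
      RingHom.map_mul]
    ring
  set U : Matrix J J ℂ := (hherm.eigenvectorUnitary : Matrix J J ℂ) with hU
  set μ : J → ℝ := hherm.eigenvalues with hμdef
  have hUU : U * star U = 1 := (Matrix.mem_unitaryGroup_iff).mp hherm.eigenvectorUnitary.2
  have hUUent : ∀ i i', (∑ j, U i' j * conj' (U i j)) = if i' = i then (1:ℂ) else 0 := by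
    intro i i'
    have := congrFun (congrFun hUU i') i
    simpa [Matrix.mul_apply, Matrix.one_apply, Matrix.star_apply, Complex.star_def] using this
  -- transformed vectors
  set W : α → J → ℂ := fun a j => ∑ i, conj' (U i j) * w a i with hW
  -- the key orthogonality identity
  have hS : ∀ j j', ∑ a, (q a : ℂ) * W a j * conj' (W a j')
      = if j = j' then (μ j : ℂ) else 0 := by
    intro j j'
    have h1 : (star U * σ * U) j j' = if j = j' then (μ j : ℂ) else 0 := by
      rw [hU, ← Unitary.conjStarAlgAut_star_apply (S := ℂ),
        hherm.conjStarAlgAut_star_eigenvectorUnitary]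
      rw [Matrix.diagonal_apply]
      by_cases h : j = j' <;> simp [h, hμdef]
    rw [← h1]
    have h2 : (star U * σ * U) j j'
        = ∑ i, ∑ i', ∑ a, conj' (U i j) * ((q a : ℂ) * w a i * conj' (w a i')) * U i' j' := by
      simp only [Matrix.mul_apply, Matrix.star_apply, Complex.star_def, Finset.sum_mul, hσ,
        Finset.mul_sum]
      rw [Finset.sum_comm]
    rw [h2]
    calc ∑ a, (q a : ℂ) * W a j * conj' (W a j')
        = ∑ a, ∑ i, ∑ i', (q a : ℂ) * (conj' (U i j) * w a i) * (U i' j' * conj' (w a i')) := by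
          refine Finset.sum_congr rfl fun a _ => ?_
          simp only [hW, map_sum, RingHom.map_mul, Complex.conj_conj]
          exact mul_sum_sum _ _ _
      _ = ∑ i, ∑ i', ∑ a, conj' (U i j) * ((q a : ℂ) * w a i * conj' (w a i')) * U i' j' := by
          rw [Finset.sum_comm]
          refine Finset.sum_congr rfl fun i _ => ?_
          rw [Finset.sum_comm]
          refine Finset.sum_congr rfl fun i' _ => Finset.sum_congr rfl fun a _ => by ring
  -- diagonal entries
  have hdiagreal : ∀ j, μ j = ∑ a, q a * Complex.normSq (W a j) := by
    intro j
    have h0 := hS j j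
    rw [if_pos rfl] at h0
    have h1 : ((μ j : ℂ)) = ∑ a, ((q a * Complex.normSq (W a j) : ℝ) : ℂ) := by
      rw [← h0]
      refine Finset.sum_congr rfl fun a _ => ?_
      rw [mul_assoc, Complex.mul_conj]
      push_cast
      ring
    exact_mod_cast h1
  have hμ0 : ∀ j, 0 ≤ μ j := fun j => by
    rw [hdiagreal j]
    exact Finset.sum_nonneg fun a _ => mul_nonneg (hq a) (Complex.normSq_nonneg _)
  -- norms preserved
  have hWnorm : ∀ a, ∑ j, Complex.normSq (W a j) = 1 := by
    intro a
    have h1 : ∑ j, (Complex.normSq (W a j) : ℂ) = 1 := by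
      calc ∑ j, (Complex.normSq (W a j) : ℂ) = ∑ j, W a j * conj' (W a j) := by
            refine Finset.sum_congr rfl fun j _ => (Complex.mul_conj _).symm
        _ = ∑ j, ∑ i, ∑ i', (1:ℂ) * (conj' (U i j) * w a i) * (U i' j * conj' (w a i')) := by
            refine Finset.sum_congr rfl fun j _ => ?_
            simp only [hW, map_sum, RingHom.map_mul, Complex.conj_conj]
            rw [← one_mul ((∑ i, conj' (U i j) * w a i))]
            rw [mul_sum_sum 1 (fun i => conj' (U i j) * w a i)
              (fun i' => U i' j * conj' (w a i'))]
        _ = ∑ i, ∑ i', (w a i * conj' (w a i')) * ∑ j, U i' j * conj' (U i j) := by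
            rw [Finset.sum_comm]
            refine Finset.sum_congr rfl fun i _ => ?_
            rw [Finset.sum_comm]
            refine Finset.sum_congr rfl fun i' _ => ?_
            rw [Finset.mul_sum]
            exact Finset.sum_congr rfl fun j _ => by ring
        _ = ∑ i, w a i * conj' (w a i) := by
            refine Finset.sum_congr rfl fun i _ => ?_
            rw [Finset.sum_eq_single_of_mem i (Finset.mem_univ i)]
            · rw [hUUent i i, if_pos rfl, mul_one]
            · intro i' _ hne
              rw [hUUent i i', if_neg hne, mul_zero]
        _ = ∑ i, (Complex.normSq (w a i) : ℂ) := by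
            refine Finset.sum_congr rfl fun i _ => Complex.mul_conj _
        _ = 1 := by rw [← Complex.ofReal_sum, hw a, Complex.ofReal_one]
    rw [← Complex.ofReal_sum] at h1
    exact_mod_cast h1
  -- weights of the doubly substochastic map
  set D : α → J → ℝ := fun a j => if 0 < μ j then q a * Complex.normSq (W a j) / μ j else 0
    with hD
  have hDnn : ∀ a j, 0 ≤ D a j := by
    intro a j
    by_cases h : 0 < μ j
    · simp only [hD, if_pos h]
      exact div_nonneg (mul_nonneg (hq a) (Complex.normSq_nonneg _)) h.le
    · simp [hD, h]
  have hvanish : ∀ j, ¬ 0 < μ j → ∀ a, q a * Complex.normSq (W a j) = 0 := by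
    intro j h a
    have hz : μ j = 0 := le_antisymm (not_lt.mp h) (hμ0 j)
    have hsum : ∑ a, q a * Complex.normSq (W a j) = 0 := by rw [← hdiagreal j, hz]
    exact (Finset.sum_eq_zero_iff_of_nonneg
      (fun a _ => mul_nonneg (hq a) (Complex.normSq_nonneg _))).mp hsum a (Finset.mem_univ a)
  have hcol : ∀ j, 0 < μ j → ∑ a, D a j = 1 := by
    intro j h
    simp only [hD, if_pos h]
    rw [← Finset.sum_div, ← hdiagreal j]
    exact div_self (ne_of_gt h)
  have hqD : ∀ a, q a = ∑ j, D a j * μ j := by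
    intro a
    have h1 : q a = ∑ j, q a * Complex.normSq (W a j) := by
      rw [← Finset.mul_sum, hWnorm a, mul_one]
    rw [h1]
    refine Finset.sum_congr rfl fun j _ => ?_
    by_cases h : 0 < μ j
    · simp only [hD, if_pos h]
      field_simp
    · rw [hvanish j h a]
      simp [hD, h]
  -- row sums at most 1, via the projection trick
  have hrow : ∀ a, ∑ j, D a j ≤ 1 := by
    intro a
    set S : Finset J := Finset.univ.filter (fun j => 0 < μ j) with hSdef
    set x : J → α → ℂ := fun j b => (Real.sqrt (q b) : ℂ) * W b j / (Real.sqrt (μ j) : ℂ)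
      with hx
    have hortho : ∀ j ∈ S, ∀ j' ∈ S,
        ∑ b, x j b * conj' (x j' b) = if j = j' then 1 else 0 := by
      intro j hj j' hj'
      have hjp : 0 < μ j := (Finset.mem_filter.mp hj).2
      have hjp' : 0 < μ j' := (Finset.mem_filter.mp hj').2
      have h1 : ∑ b, x j b * conj' (x j' b)
          = (∑ b, (q b : ℂ) * W b j * conj' (W b j'))
            / ((Real.sqrt (μ j) : ℂ) * (Real.sqrt (μ j') : ℂ)) := by
        rw [Finset.sum_div]
        refine Finset.sum_congr rfl fun b _ => ?_
        simp only [hx, RingHom.map_mul, map_div₀, Complex.conj_ofReal]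
        have hqb : (Real.sqrt (q b) : ℂ) * (Real.sqrt (q b) : ℂ) = (q b : ℂ) := by
          rw [← Complex.ofReal_mul, Real.mul_self_sqrt (hq b)]
        field_simp
        rw [← hqb]
        ring
      rw [h1, hS j j']
      by_cases h : j = j'
      · subst h
        rw [if_pos rfl, if_pos rfl, ← Complex.ofReal_mul, Real.mul_self_sqrt hjp.le]
        exact div_self (by exact_mod_cast hjp.ne')
      · rw [if_neg h, if_neg h, zero_div]
    set r : ℝ := ∑ j ∈ S, Complex.normSq (x j a) with hr
    have hrnn : 0 ≤ r := Finset.sum_nonneg fun j _ => Complex.normSq_nonneg _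
    set P : α → ℂ := fun c => ∑ j ∈ S, x j a * conj' (x j c) with hP
    have hPa : P a = (r : ℂ) := by
      rw [hP, hr]
      push_cast
      exact Finset.sum_congr rfl fun j _ => Complex.mul_conj _
    have hPsum : ∑ c, Complex.normSq (P c) = r := by
      have h1 : ∑ c, (Complex.normSq (P c) : ℂ) = (r : ℂ) := by
        calc ∑ c, (Complex.normSq (P c) : ℂ) = ∑ c, P c * conj' (P c) := by
              exact Finset.sum_congr rfl fun c _ => (Complex.mul_conj _).symm
          _ = ∑ c, ∑ j ∈ S, ∑ j' ∈ S,
                (x j a * conj' (x j c)) * (conj' (x j' a) * x j' c) := by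
              refine Finset.sum_congr rfl fun c _ => ?_
              rw [hP, map_sum, Finset.sum_mul_sum]
              refine Finset.sum_congr rfl fun j _ => Finset.sum_congr rfl fun j' _ => ?_
              simp only [RingHom.map_mul, Complex.conj_conj]
          _ = ∑ j ∈ S, ∑ j' ∈ S,
                (x j a * conj' (x j' a)) * ∑ c, x j' c * conj' (x j c) := by
              rw [Finset.sum_comm]
              refine Finset.sum_congr rfl fun j _ => ?_
              rw [Finset.sum_comm]
              refine Finset.sum_congr rfl fun j' _ => ?_
              rw [Finset.mul_sum]
              exact Finset.sum_congr rfl fun c _ => by ring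
          _ = ∑ j ∈ S, x j a * conj' (x j a) := by
              refine Finset.sum_congr rfl fun j hj => ?_
              rw [Finset.sum_eq_single_of_mem j hj]
              · rw [hortho j hj j hj, if_pos rfl, mul_one]
              · intro j' hj' hne
                rw [hortho j' hj' j hj, if_neg hne, mul_zero]
          _ = (r : ℂ) := by
              rw [hr]
              push_cast
              exact Finset.sum_congr rfl fun j _ => Complex.mul_conj _
      rw [← Complex.ofReal_sum] at h1
      exact_mod_cast h1
    have hr2 : r ^ 2 ≤ r := by
      have h1 : Complex.normSq (P a) ≤ ∑ c, Complex.normSq (P c) :=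
        Finset.single_le_sum (fun c _ => Complex.normSq_nonneg _) (Finset.mem_univ a)
      rw [hPsum, hPa, Complex.normSq_ofReal] at h1
      simpa [sq] using h1
    have hrle1 : r ≤ 1 := by nlinarith
    have hDr : ∑ j, D a j = r := by
      rw [hr, ← Finset.sum_filter_add_sum_filter_not Finset.univ (fun j => 0 < μ j) (D a)]
      have h2 : ∑ j ∈ Finset.univ.filter (fun j => ¬ 0 < μ j), D a j = 0 :=
        Finset.sum_eq_zero fun j hj => by
          simp [hD, (Finset.mem_filter.mp hj).2]
      rw [h2, add_zero]
      refine Finset.sum_congr rfl fun j hj => ?_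
      have hjp : 0 < μ j := (Finset.mem_filter.mp hj).2
      simp only [hD, if_pos hjp, hx]
      rw [Complex.normSq_div, Complex.normSq_mul, Complex.normSq_ofReal,
        Complex.normSq_ofReal, Real.mul_self_sqrt (hq a), Real.mul_self_sqrt hjp.le]
    rw [hDr]
    exact hrle1
  -- put it all together
  have hent : AFL.vNEntropy σ = ∑ j, Real.negMulLog (μ j) := by
    rw [AFL.vNEntropy, dif_pos hherm]
    rw [← Finset.sum_neg_distrib]
    exact Finset.sum_congr rfl fun j _ => by rw [Real.negMulLog]; ring
  rw [hent]
  calc ∑ j, Real.negMulLog (μ j) = ∑ j, ∑ a, D a j * Real.negMulLog (μ j) := by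
        refine Finset.sum_congr rfl fun j _ => ?_
        by_cases h : 0 < μ j
        · rw [← Finset.sum_mul, hcol j h, one_mul]
        · have hz : μ j = 0 := le_antisymm (not_lt.mp h) (hμ0 j)
          simp [hz]
    _ = ∑ a, ∑ j, D a j * Real.negMulLog (μ j) := Finset.sum_comm
    _ ≤ ∑ a, Real.negMulLog (q a) := by
        refine Finset.sum_le_sum fun a _ => ?_
        rw [hqD a]
        exact negMulLog_jensen (D a) μ (hDnn a) (hrow a) hμ0


lemma multiKraus_zero {K : Type*} (U : Matrix n n ℂ) (X : K → Matrix n n ℂ)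
    (idx : Fin 0 → K) : multiKraus U X 0 idx = 1 := by
  simp [multiKraus]

lemma multiKraus_succ {K : Type*} (U : Matrix n n ℂ) (X : K → Matrix n n ℂ)
    (t : ℕ) (idx : Fin (t + 1) → K) :
    multiKraus U X (t + 1) idx = (U * X (idx 0)) * multiKraus U X t (fun k => idx k.succ) := by
  simp [multiKraus, List.ofFn_succ]

/-- the multitime Kraus operators form a partition of unity -/
lemma multiKraus_partition {K : Type*} [Fintype K] (U : Matrix n n ℂ)
    (hU : U ∈ Matrix.unitaryGroup n ℂ) (X : K → Matrix n n ℂ) (hX : IsPartition X) (t : ℕ) :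
    ∑ idx : Fin t → K, (multiKraus U X t idx)ᴴ * multiKraus U X t idx = 1 := by
  classical
  induction t with
  | zero =>
      rw [Fintype.sum_unique]
      simp [multiKraus_zero]
  | succ t ih =>
      have hUU : Uᴴ * U = 1 := by
        have := Matrix.mem_unitaryGroup_iff'.mp hU
        simpa [Matrix.star_eq_conjTranspose] using this
      rw [← Equiv.sum_comp (Fin.consEquiv fun _ : Fin (t+1) => K)
        (fun idx => (multiKraus U X (t+1) idx)ᴴ * multiKraus U X (t+1) idx)]
      rw [Fintype.sum_prod_type]
      have hterm : ∀ (i0 : K) (tl : Fin t → K),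
          (multiKraus U X (t+1) (Fin.cons i0 tl))ᴴ * multiKraus U X (t+1) (Fin.cons i0 tl)
          = (multiKraus U X t tl)ᴴ * ((X i0)ᴴ * X i0) * multiKraus U X t tl := by
        intro i0 tl
        rw [multiKraus_succ]
        have h0 : (Fin.cons i0 tl : Fin (t+1) → K) 0 = i0 := rfl
        have hsucc : (fun k : Fin t => (Fin.cons i0 tl : Fin (t+1) → K) k.succ) = tl := by
          funext k; simp
        rw [h0, hsucc]
        rw [Matrix.conjTranspose_mul, Matrix.conjTranspose_mul]
        calc (multiKraus U X t tl)ᴴ * ((X i0)ᴴ * Uᴴ) * (U * X i0 * multiKraus U X t tl)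
            = (multiKraus U X t tl)ᴴ * ((X i0)ᴴ * (Uᴴ * U) * X i0) * multiKraus U X t tl := by
              simp only [Matrix.mul_assoc]
          _ = (multiKraus U X t tl)ᴴ * ((X i0)ᴴ * X i0) * multiKraus U X t tl := by
              rw [hUU, Matrix.mul_one]
      calc ∑ i0 : K, ∑ tl : Fin t → K,
              (multiKraus U X (t+1) ((Fin.consEquiv fun _ => K) (i0, tl)))ᴴ *
                multiKraus U X (t+1) ((Fin.consEquiv fun _ => K) (i0, tl))
          = ∑ tl : Fin t → K, ∑ i0 : K,
              (multiKraus U X t tl)ᴴ * ((X i0)ᴴ * X i0) * multiKraus U X t tl := by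
            rw [Finset.sum_comm]
            exact Finset.sum_congr rfl fun tl _ => Finset.sum_congr rfl fun i0 _ =>
              hterm i0 tl
        _ = ∑ tl : Fin t → K, (multiKraus U X t tl)ᴴ * multiKraus U X t tl := by
            refine Finset.sum_congr rfl fun tl _ => ?_
            rw [← Finset.sum_mul, ← Finset.mul_sum, hX, Matrix.mul_one]
        _ = 1 := ih

/-- trace of the environment state -/
lemma trace_envState {K : Type*} [Fintype K] (X : K → Matrix n n ℂ)
    (hX : ∑ i, (X i)ᴴ * X i = 1) (ρ : Matrix n n ℂ) :
    (envState X ρ).trace = ρ.trace := by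
  have h1 : (envState X ρ).trace = ∑ i, (X i * ρ * (X i)ᴴ).trace := by
    rw [Matrix.trace]
    exact Finset.sum_congr rfl fun i _ => rfl
  rw [h1]
  have h2 : ∀ i : K, (X i * ρ * (X i)ᴴ).trace = ((X i)ᴴ * X i * ρ).trace := by
    intro i
    rw [Matrix.trace_mul_cycle]
  rw [Finset.sum_congr rfl fun i _ => h2 i, ← Matrix.trace_sum]
  have : ∑ i, (X i)ᴴ * X i * ρ = (∑ i, (X i)ᴴ * X i) * ρ := by
    rw [Finset.sum_mul]
  rw [this, hX, Matrix.one_mul]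

open scoped MatrixOrder in
/-- the environment state is positive semidefinite -/
lemma posSemidef_envState {K : Type*} [Fintype K] [DecidableEq K] (X : K → Matrix n n ℂ)
    (ρ : Matrix n n ℂ) (hρ : ρ.PosSemidef) : (envState X ρ).PosSemidef := by
  classical
  set s : Matrix n n ℂ := CFC.sqrt ρ with hs
  have hss : s * s = ρ := CFC.sqrt_mul_sqrt_self ρ hρ.nonneg
  have hsh : sᴴ = s := (CFC.sqrt_nonneg ρ).posSemidef.isHermitian
  set B : Matrix (n × n) K ℂ := Matrix.of (fun p a => star ((X a * s) p.1 p.2)) with hB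
  have key : envState X ρ = Bᴴ * B := by
    ext a b
    have h1 : envState X ρ a b = (X a * s * (X b * s)ᴴ).trace := by
      show (X a * ρ * (X b)ᴴ).trace = _
      rw [Matrix.conjTranspose_mul, hsh, ← hss]
      simp only [Matrix.mul_assoc]
    have h2 : (Bᴴ * B) a b = ∑ p : n × n, (X a * s) p.1 p.2 * star ((X b * s) p.1 p.2) := by
      rw [Matrix.mul_apply]
      refine Finset.sum_congr rfl fun p _ => ?_
      simp only [hB, Matrix.conjTranspose_apply, Matrix.of_apply, star_star]
    have h3 : (X a * s * (X b * s)ᴴ).trace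
        = ∑ p : n × n, (X a * s) p.1 p.2 * star ((X b * s) p.1 p.2) := by
      rw [Matrix.trace, Fintype.sum_prod_type]
      refine Finset.sum_congr rfl fun i _ => ?_
      rw [Matrix.diag_apply, Matrix.mul_apply]
      refine Finset.sum_congr rfl fun j _ => ?_
      rw [Matrix.conjTranspose_apply]
    rw [h1, h2, h3]
  rw [key]
  exact Matrix.posSemidef_conjTranspose_mul_self B

/-- entrywise spectral decomposition -/
lemma spectral_entry {J : Type*} [Fintype J] [DecidableEq J] {A : Matrix J J ℂ}
    (hA : A.IsHermitian) (i j : J) :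
    A i j = ∑ k, (hA.eigenvalues k : ℂ) * (hA.eigenvectorUnitary : Matrix J J ℂ) i k *
      conj' ((hA.eigenvectorUnitary : Matrix J J ℂ) j k) := by
  conv_lhs => rw [hA.spectral_theorem, Unitary.conjStarAlgAut_apply]
  rw [Matrix.mul_apply]
  refine Finset.sum_congr rfl fun k _ => ?_
  rw [Matrix.mul_apply]
  rw [Finset.sum_eq_single_of_mem k (Finset.mem_univ k)]
  · simp only [Matrix.diagonal_apply_eq, Matrix.star_apply, Complex.star_def,
      Function.comp_apply]
    have : (RCLike.ofReal (hA.eigenvalues k) : ℂ) = (hA.eigenvalues k : ℂ) := rfl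
    rw [this]
    ring
  · intro k' _ hne
    simp [Matrix.diagonal_apply_ne _ hne]

/-- columns of the eigenvector unitary are unit vectors -/
lemma eigenvectorUnitary_col_norm {J : Type*} [Fintype J] [DecidableEq J] {A : Matrix J J ℂ}
    (hA : A.IsHermitian) (k : J) :
    ∑ i, Complex.normSq ((hA.eigenvectorUnitary : Matrix J J ℂ) i k) = 1 := by
  have hUU : star (hA.eigenvectorUnitary : Matrix J J ℂ) *
      (hA.eigenvectorUnitary : Matrix J J ℂ) = 1 :=
    Matrix.mem_unitaryGroup_iff'.mp hA.eigenvectorUnitary.2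
  have h1 := congrFun (congrFun hUU k) k
  simp only [Matrix.mul_apply, Matrix.star_apply, Matrix.one_apply_eq] at h1
  have h2 : ∑ i, (Complex.normSq ((hA.eigenvectorUnitary : Matrix J J ℂ) i k) : ℂ) = 1 := by
    rw [← h1]
    refine Finset.sum_congr rfl fun i _ => ?_
    rw [Complex.star_def, mul_comm, Complex.mul_conj]
  rw [← Complex.ofReal_sum] at h2
  exact_mod_cast h2


/-- multiKraus commutes with blockDiagonal' -/
lemma multiKraus_blockDiagonal' {o : Type*} [Fintype o] [DecidableEq o]
    {md : o → Type*} [∀ i, Fintype (md i)] [∀ i, DecidableEq (md i)] {K : Type*}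
    (U : ∀ i, Matrix (md i) (md i) ℂ) (X : ∀ i, K → Matrix (md i) (md i) ℂ)
    (t : ℕ) (idx : Fin t → K) :
    multiKraus (Matrix.blockDiagonal' U) (fun k => Matrix.blockDiagonal' fun i => X i k) t idx
      = Matrix.blockDiagonal' (fun i => multiKraus (U i) (X i) t idx) := by
  induction t with
  | zero =>
      simp only [multiKraus_zero]
      rw [show (fun i : o => (1 : Matrix (md i) (md i) ℂ)) = 1 from rfl,
        Matrix.blockDiagonal'_one]
  | succ t ih =>
      rw [multiKraus_succ, ih, ← Matrix.blockDiagonal'_mul, ← Matrix.blockDiagonal'_mul]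
      refine congrArg Matrix.blockDiagonal' (funext fun i => ?_)
      rw [multiKraus_succ]

/-- multiKraus factorizes through Kronecker products -/
lemma multiKraus_kronecker {m1 m2 K1 K2 : Type*} [Fintype m1] [DecidableEq m1]
    [Fintype m2] [DecidableEq m2]
    (U : Matrix m2 m2 ℂ) (X : K1 → Matrix m1 m1 ℂ) (Y : K2 → Matrix m2 m2 ℂ)
    (t : ℕ) (idx : Fin t → K1 × K2) :
    multiKraus ((1 : Matrix m1 m1 ℂ) ⊗ₖ U) (fun ij : K1 × K2 => X ij.1 ⊗ₖ Y ij.2) t idx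
      = multiKraus 1 X t (fun k => (idx k).1) ⊗ₖ multiKraus U Y t (fun k => (idx k).2) := by
  induction t with
  | zero =>
      simp only [multiKraus_zero]
      rw [Matrix.one_kronecker_one]
  | succ t ih =>
      rw [multiKraus_succ, ih, multiKraus_succ, multiKraus_succ,
        ← Matrix.mul_kronecker_mul, ← Matrix.mul_kronecker_mul]

lemma kronecker_conjTranspose {m1 m2 : Type*} [Fintype m1] [Fintype m2]
    (A : Matrix m1 m1 ℂ) (B : Matrix m2 m2 ℂ) : (A ⊗ₖ B)ᴴ = Aᴴ ⊗ₖ Bᴴ := by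
  ext i j
  simp only [Matrix.conjTranspose_apply, Matrix.kroneckerMap_apply, star_mul']

/-- sum of eigenvalues is the trace -/
lemma sum_eigenvalues_eq_trace {J : Type*} [Fintype J] [DecidableEq J] {A : Matrix J J ℂ}
    (hA : A.IsHermitian) : ((∑ k, hA.eigenvalues k : ℝ) : ℂ) = A.trace := by
  conv_rhs => rw [hA.spectral_theorem, Unitary.conjStarAlgAut_apply]
  rw [Matrix.trace_mul_cycle]
  rw [show (star (hA.eigenvectorUnitary : Matrix J J ℂ)) *
      (hA.eigenvectorUnitary : Matrix J J ℂ) = 1 from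
    Matrix.mem_unitaryGroup_iff'.mp hA.eigenvectorUnitary.2, Matrix.one_mul,
    Matrix.trace_diagonal]
  push_cast
  rfl

lemma vNEntropy_eq {J : Type*} [Fintype J] [DecidableEq J] {A : Matrix J J ℂ}
    (hA : A.IsHermitian) : vNEntropy A = ∑ k, Real.negMulLog (hA.eigenvalues k) := by
  rw [vNEntropy, dif_pos hA, ← Finset.sum_neg_distrib]
  exact Finset.sum_congr rfl fun j _ => by rw [Real.negMulLog]; ring

lemma envState_apply {K : Type*} [Fintype K] (X : K → Matrix n n ℂ) (ρ : Matrix n n ℂ)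
    (i j : K) : envState X ρ i j = (X i * ρ * (X j)ᴴ).trace := rfl

/-- packaged spectral data of an environment state -/
lemma env_package {K : Type*} [Fintype K] [DecidableEq K]
    (Uu : Matrix n n ℂ) (hU : Uu ∈ Matrix.unitaryGroup n ℂ)
    (X : K → Matrix n n ℂ) (hX : IsPartition X)
    (ρ : Matrix n n ℂ) (hρ : IsDensity ρ) (t : ℕ) :
    ∃ (lam : (Fin t → K) → ℝ) (W : Matrix (Fin t → K) (Fin t → K) ℂ),
      (∀ k, 0 ≤ lam k) ∧ (∑ k, lam k = 1) ∧ (∀ k, ∑ i, Complex.normSq (W i k) = 1) ∧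
      (∀ i j, envState (multiKraus Uu X t) ρ i j = ∑ k, (lam k : ℂ) * W i k * conj' (W j k)) ∧
      (HAFL ρ Uu X t = ∑ k, Real.negMulLog (lam k)) := by
  have hpsd := posSemidef_envState (multiKraus Uu X t) ρ hρ.1
  have hherm : (envState (multiKraus Uu X t) ρ).IsHermitian := hpsd.isHermitian
  refine ⟨hherm.eigenvalues, hherm.eigenvectorUnitary, hpsd.eigenvalues_nonneg, ?_,
    fun k => eigenvectorUnitary_col_norm hherm k, fun i j => spectral_entry hherm i j, ?_⟩
  · have h1 := sum_eigenvalues_eq_trace hherm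
    rw [trace_envState _ (multiKraus_partition Uu hU X hX t) ρ, hρ.2] at h1
    exact_mod_cast h1
  · exact vNEntropy_eq hherm

end AFLProof

end

theorem stmt19 {L : Type*} [Fintype L] [DecidableEq L]
    {m m' : L → Type*} [∀ l, Fintype (m l)] [∀ l, DecidableEq (m l)]
    [∀ l, Fintype (m' l)] [∀ l, DecidableEq (m' l)]
    {V : Type*} [Fintype V]
    {K1 K2 : Type*} [Fintype K1] [DecidableEq K1] [Fintype K2] [DecidableEq K2]
    (p : L → V → ℝ) (hp : ∀ l v, 0 ≤ p l v) (hp1 : ∑ l, ∑ v, p l v = 1)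
    (ρ1 : (l : L) → V → Matrix (m l) (m l) ℂ) (ρ2 : (l : L) → V → Matrix (m' l) (m' l) ℂ)
    (hρ1 : ∀ l v, AFL.IsDensity (ρ1 l v)) (hρ2 : ∀ l v, AFL.IsDensity (ρ2 l v))
    (Ul : (l : L) → Matrix (m' l) (m' l) ℂ) (hUl : ∀ l, Ul l ∈ Matrix.unitaryGroup (m' l) ℂ)
    (Xl : (l : L) → K1 → Matrix (m l) (m l) ℂ) (hXl : ∀ l, AFL.IsPartition (Xl l))
    (X'l : (l : L) → K2 → Matrix (m' l) (m' l) ℂ) (hX'l : ∀ l, AFL.IsPartition (X'l l))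
    (t : ℕ) :
    AFL.HAFL
        (Matrix.blockDiagonal' fun l => ∑ v, (p l v : ℂ) • (ρ1 l v ⊗ₖ ρ2 l v))
        (Matrix.blockDiagonal' fun l => (1 : Matrix (m l) (m l) ℂ) ⊗ₖ Ul l)
        (fun ij : K1 × K2 => Matrix.blockDiagonal' fun l => Xl l ij.1 ⊗ₖ X'l l ij.2) t ≤
      (∑ l, ∑ v, p l v *
        (AFL.HAFL (ρ1 l v) (1 : Matrix (m l) (m l) ℂ) (Xl l) t +
         AFL.HAFL (ρ2 l v) (Ul l) (X'l l) t))
      + AFL.shannon (fun lv : L × V => p lv.1 lv.2) := by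
  classical
  -- spectral data of the two families of factor environment states
  choose lam1 W1 h1nn h1sum h1norm h1entry h1H using fun lv : L × V =>
    AFLProof.env_package (1 : Matrix (m lv.1) (m lv.1) ℂ) (one_mem _)
      (Xl lv.1) (hXl lv.1) (ρ1 lv.1 lv.2) (hρ1 lv.1 lv.2) t
  choose lam2 W2 h2nn h2sum h2norm h2entry h2H using fun lv : L × V =>
    AFLProof.env_package (Ul lv.1) (hUl lv.1)
      (X'l lv.1) (hX'l lv.1) (ρ2 lv.1 lv.2) (hρ2 lv.1 lv.2) t
  -- factorization of the global multitime Kraus operators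
  have hfact : ∀ a : Fin t → K1 × K2,
      AFL.multiKraus
        (Matrix.blockDiagonal' fun l => (1 : Matrix (m l) (m l) ℂ) ⊗ₖ Ul l)
        (fun ij : K1 × K2 => Matrix.blockDiagonal' fun l => Xl l ij.1 ⊗ₖ X'l l ij.2) t a
      = Matrix.blockDiagonal' (fun l =>
          (AFL.multiKraus 1 (Xl l) t fun k => (a k).1)
            ⊗ₖ (AFL.multiKraus (Ul l) (X'l l) t fun k => (a k).2)) := by
    intro a
    rw [AFLProof.multiKraus_blockDiagonal' (fun l => (1 : Matrix (m l) (m l) ℂ) ⊗ₖ Ul l)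
      (fun l k => Xl l k.1 ⊗ₖ X'l l k.2) t a]
    exact congrArg _ (funext fun l => AFLProof.multiKraus_kronecker (Ul l) (Xl l) (X'l l) t a)
  -- entries of the global environment state
  have hentry : ∀ a b : Fin t → K1 × K2,
      AFL.envState (AFL.multiKraus
        (Matrix.blockDiagonal' fun l => (1 : Matrix (m l) (m l) ℂ) ⊗ₖ Ul l)
        (fun ij : K1 × K2 => Matrix.blockDiagonal' fun l => Xl l ij.1 ⊗ₖ X'l l ij.2) t)
        (Matrix.blockDiagonal' fun l => ∑ v, (p l v : ℂ) • (ρ1 l v ⊗ₖ ρ2 l v)) a b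
      = ∑ l, ∑ v, (p l v : ℂ) *
          (AFL.envState (AFL.multiKraus 1 (Xl l) t) (ρ1 l v)
            (fun k => (a k).1) (fun k => (b k).1)) *
          (AFL.envState (AFL.multiKraus (Ul l) (X'l l) t) (ρ2 l v)
            (fun k => (a k).2) (fun k => (b k).2)) := by
    intro a b
    rw [AFLProof.envState_apply]
    rw [hfact a, hfact b, Matrix.blockDiagonal'_conjTranspose,
      ← Matrix.blockDiagonal'_mul, ← Matrix.blockDiagonal'_mul,
      Matrix.trace_blockDiagonal']
    refine Finset.sum_congr rfl fun l _ => ?_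
    rw [AFLProof.kronecker_conjTranspose]
    rw [Finset.mul_sum, Finset.sum_mul, Matrix.trace_sum]
    refine Finset.sum_congr rfl fun v _ => ?_
    rw [mul_smul_comm, smul_mul_assoc, Matrix.trace_smul,
      ← Matrix.mul_kronecker_mul, ← Matrix.mul_kronecker_mul, Matrix.trace_kronecker]
    simp only [smul_eq_mul, AFLProof.envState_apply, Matrix.mul_assoc]
    ring
  -- rank-one decomposition data for the global environment state
  set q : (L × V) × (Fin t → K1) × (Fin t → K2) → ℝ :=
    fun y => p y.1.1 y.1.2 * lam1 y.1 y.2.1 * lam2 y.1 y.2.2 with hqdef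
  set wv : (L × V) × (Fin t → K1) × (Fin t → K2) → (Fin t → K1 × K2) → ℂ :=
    fun y i => W1 y.1 (fun k => (i k).1) y.2.1 * W2 y.1 (fun k => (i k).2) y.2.2 with hwdef
  have hqnn : ∀ y, 0 ≤ q y := fun y =>
    mul_nonneg (mul_nonneg (hp _ _) (h1nn _ _)) (h2nn _ _)
  have hwnorm : ∀ y, ∑ i, Complex.normSq (wv y i) = 1 := by
    intro y
    rw [Fintype.sum_equiv (Equiv.arrowProdEquivProdArrow (Fin t) (fun _ => K1) (fun _ => K2))
      (fun i => Complex.normSq (wv y i))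
      (fun z : (Fin t → K1) × (Fin t → K2) =>
        Complex.normSq (W1 y.1 z.1 y.2.1) * Complex.normSq (W2 y.1 z.2 y.2.2))
      (fun i => by simp only [hwdef, Complex.normSq_mul]; rfl)]
    rw [Fintype.sum_prod_type]
    calc ∑ z1 : Fin t → K1, ∑ z2 : Fin t → K2,
          Complex.normSq (W1 y.1 z1 y.2.1) * Complex.normSq (W2 y.1 z2 y.2.2)
        = (∑ z1 : Fin t → K1, Complex.normSq (W1 y.1 z1 y.2.1)) *
          (∑ z2 : Fin t → K2, Complex.normSq (W2 y.1 z2 y.2.2)) := by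
          rw [Fintype.sum_mul_sum]
      _ = 1 := by rw [h1norm, h2norm, mul_one]
  -- the rank-one decomposition of the global environment state
  have hσ : ∀ i j : Fin t → K1 × K2,
      AFL.envState (AFL.multiKraus
        (Matrix.blockDiagonal' fun l => (1 : Matrix (m l) (m l) ℂ) ⊗ₖ Ul l)
        (fun ij : K1 × K2 => Matrix.blockDiagonal' fun l => Xl l ij.1 ⊗ₖ X'l l ij.2) t)
        (Matrix.blockDiagonal' fun l => ∑ v, (p l v : ℂ) • (ρ1 l v ⊗ₖ ρ2 l v)) i j
      = ∑ y, (q y : ℂ) * wv y i * (starRingEnd ℂ) (wv y j) := by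
    intro i j
    rw [hentry i j]
    rw [show (∑ y, (q y : ℂ) * wv y i * (starRingEnd ℂ) (wv y j))
        = ∑ lv : L × V, ∑ z : (Fin t → K1) × (Fin t → K2),
            (q (lv, z) : ℂ) * wv (lv, z) i * (starRingEnd ℂ) (wv (lv, z) j) from
      Fintype.sum_prod_type _]
    rw [← Fintype.sum_prod_type']
    refine Finset.sum_congr rfl fun lv _ => ?_
    rw [h1entry lv, h2entry lv]
    rw [AFLProof.mul_sum_sum]
    rw [show (∑ z : (Fin t → K1) × (Fin t → K2),
          (q (lv, z) : ℂ) * wv (lv, z) i * (starRingEnd ℂ) (wv (lv, z) j))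
        = ∑ z1 : Fin t → K1, ∑ z2 : Fin t → K2,
            (q (lv, (z1, z2)) : ℂ) * wv (lv, (z1, z2)) i * (starRingEnd ℂ) (wv (lv, (z1, z2)) j) from
      Fintype.sum_prod_type _]
    refine Finset.sum_congr rfl fun z1 _ => Finset.sum_congr rfl fun z2 _ => ?_
    simp only [hqdef, hwdef, RingHom.map_mul, Complex.ofReal_mul]
    ring
  -- apply the key entropy bound
  have hkey := AFLProof.vNEntropy_le_of_rankOne q hqnn wv hwnorm _ hσ
  refine le_trans hkey ?_
  -- now identify the right-hand side via the chain rule for Shannon entropy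
  have hsplit : ∑ y, Real.negMulLog (q y)
      = ∑ lv : L × V, (Real.negMulLog (p lv.1 lv.2)
          + p lv.1 lv.2 * ((∑ k, Real.negMulLog (lam1 lv k))
              + (∑ k, Real.negMulLog (lam2 lv k)))) := by
    rw [Fintype.sum_prod_type]
    refine Finset.sum_congr rfl fun lv _ => ?_
    rw [Fintype.sum_prod_type]
    have inner2 : ∀ z1 : Fin t → K1,
        ∑ z2 : Fin t → K2, Real.negMulLog (p lv.1 lv.2 * lam1 lv z1 * lam2 lv z2)
        = Real.negMulLog (p lv.1 lv.2 * lam1 lv z1)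
          + (p lv.1 lv.2 * lam1 lv z1) * ∑ k, Real.negMulLog (lam2 lv k) := by
      intro z1
      have : ∀ z2 : Fin t → K2, Real.negMulLog (p lv.1 lv.2 * lam1 lv z1 * lam2 lv z2)
          = lam2 lv z2 * Real.negMulLog (p lv.1 lv.2 * lam1 lv z1)
            + (p lv.1 lv.2 * lam1 lv z1) * Real.negMulLog (lam2 lv z2) :=
        fun z2 => Real.negMulLog_mul _ _
      rw [Finset.sum_congr rfl fun z2 _ => this z2, Finset.sum_add_distrib,
        ← Finset.sum_mul, h2sum, one_mul, ← Finset.mul_sum]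
    rw [Finset.sum_congr rfl fun z1 _ => inner2 z1, Finset.sum_add_distrib]
    have inner1 : ∑ z1 : Fin t → K1, Real.negMulLog (p lv.1 lv.2 * lam1 lv z1)
        = Real.negMulLog (p lv.1 lv.2) + p lv.1 lv.2 * ∑ k, Real.negMulLog (lam1 lv k) := by
      have : ∀ z1 : Fin t → K1, Real.negMulLog (p lv.1 lv.2 * lam1 lv z1)
          = lam1 lv z1 * Real.negMulLog (p lv.1 lv.2)
            + p lv.1 lv.2 * Real.negMulLog (lam1 lv z1) :=
        fun z1 => Real.negMulLog_mul _ _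
      rw [Finset.sum_congr rfl fun z1 _ => this z1, Finset.sum_add_distrib,
        ← Finset.sum_mul, h1sum, one_mul, ← Finset.mul_sum]
    have inner3 : ∑ z1 : Fin t → K1,
        (p lv.1 lv.2 * lam1 lv z1) * ∑ k, Real.negMulLog (lam2 lv k)
        = p lv.1 lv.2 * ∑ k, Real.negMulLog (lam2 lv k) := by
      rw [← Finset.sum_mul]
      rw [← Finset.mul_sum, h1sum, mul_one]
    rw [inner1, inner3]
    ring
  rw [hsplit]
  -- identify with the RHS of the theorem statement
  have hRHS1 : (∑ l, ∑ v, p l v *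
        (AFL.HAFL (ρ1 l v) (1 : Matrix (m l) (m l) ℂ) (Xl l) t +
         AFL.HAFL (ρ2 l v) (Ul l) (X'l l) t))
      = ∑ lv : L × V, p lv.1 lv.2 * ((∑ k, Real.negMulLog (lam1 lv k))
          + (∑ k, Real.negMulLog (lam2 lv k))) := by
    rw [Fintype.sum_prod_type]
    refine Finset.sum_congr rfl fun l _ => Finset.sum_congr rfl fun v _ => ?_
    rw [h1H (l, v), h2H (l, v)]
  have hRHS2 : AFL.shannon (fun lv : L × V => p lv.1 lv.2)
      = ∑ lv : L × V, Real.negMulLog (p lv.1 lv.2) := by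
    rw [AFL.shannon, ← Finset.sum_neg_distrib]
    exact Finset.sum_congr rfl fun lv _ => by rw [Real.negMulLog]; ring
  rw [hRHS1, hRHS2, ← Finset.sum_add_distrib]
  refine le_of_eq (Finset.sum_congr rfl fun lv _ => ?_)
  ring
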